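/- arXiv:1311.6367 — 2 statements merged into one kernel-verified Lean document; each statement's English description precedes it below -/
import Mathlib

section
/- Let (P_μ)_{μ∈𝒫(E)} be a nonlinear Markov transition kernel family on a measurable space (E,ℰ) satisfying the global nonlinear Dobrushin condition with constant α ∈ (0,1] and the measure-Lipschitz condition with constant λ ≥ 0. Then for all probability measures μ, ν ∈ 𝒫(E), d_TV(P_μ μ, P_ν ν) ≤ (1 − α + λ) d_TV(μ,ν) − (λ/2) d_TV(μ,ν)². -/
open MeasureTheory ProbabilityTheory

/-- Total variation distance: `d_TV(μ,ν) = 2 ⨆_{A measurable} |μ(A) − ν(A)|`. -/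
noncomputable def dTV {E : Type*} [MeasurableSpace E] (μ ν : Measure E) : ℝ :=
  2 * ⨆ A : {A : Set E // MeasurableSet A}, |(μ A.1).toReal - (ν A.1).toReal|

section aux

variable {E : Type*} [MeasurableSpace E]

instance : Nonempty {A : Set E // MeasurableSet A} := ⟨⟨∅, MeasurableSet.empty⟩⟩

lemma measReal_le_one (μ : Measure E) [IsProbabilityMeasure μ] (A : Set E) :
    (μ A).toReal ≤ 1 := by
  have h := measure_mono (μ := μ) (Set.subset_univ A)
  have := ENNReal.toReal_mono (by simp [measure_univ]) h
  simpa [measure_univ] using this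

lemma dTV_bddAbove (μ ν : Measure E) [IsProbabilityMeasure μ] [IsProbabilityMeasure ν] :
    BddAbove (Set.range fun A : {A : Set E // MeasurableSet A} =>
      |(μ A.1).toReal - (ν A.1).toReal|) := by
  refine ⟨1, ?_⟩
  rintro x ⟨A, rfl⟩
  have h1 := measReal_le_one μ A.1
  have h2 := measReal_le_one ν A.1
  have h3 : (0:ℝ) ≤ (μ A.1).toReal := ENNReal.toReal_nonneg
  have h4 : (0:ℝ) ≤ (ν A.1).toReal := ENNReal.toReal_nonneg
  rw [abs_le]; constructor <;> linarith

lemma abs_sub_le_half_dTV (μ ν : Measure E) [IsProbabilityMeasure μ] [IsProbabilityMeasure ν]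
    {A : Set E} (hA : MeasurableSet A) :
    |(μ A).toReal - (ν A).toReal| ≤ dTV μ ν / 2 := by
  have h := le_ciSup (dTV_bddAbove μ ν) ⟨A, hA⟩
  unfold dTV; linarith

lemma dTV_le_of_forall (μ ν : Measure E) {c : ℝ}
    (h : ∀ A : Set E, MeasurableSet A → |(μ A).toReal - (ν A).toReal| ≤ c) :
    dTV μ ν ≤ 2 * c := by
  unfold dTV
  have : (⨆ A : {A : Set E // MeasurableSet A}, |(μ A.1).toReal - (ν A.1).toReal|) ≤ c :=
    ciSup_le fun A => h A.1 A.2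
  linarith

lemma dTV_comm (μ ν : Measure E) : dTV μ ν = dTV ν μ := by
  unfold dTV
  congr 1
  exact iSup_congr fun A => abs_sub_comm _ _

lemma integrable_of_le_one {f : E → ℝ} (hf : Measurable f) (h0 : ∀ x, 0 ≤ f x)
    (h1 : ∀ x, f x ≤ 1) (ρ : Measure E) [IsFiniteMeasure ρ] : Integrable f ρ := by
  refine (integrable_const (1:ℝ)).mono' hf.aestronglyMeasurable (ae_of_all _ fun x => ?_)
  rw [Real.norm_eq_abs, abs_of_nonneg (h0 x)]
  exact h1 x

/-- One-sided core estimate. -/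
lemma one_sided
    (P : Measure E → Kernel E E) (hMarkov : ∀ μ, IsMarkovKernel (P μ))
    (α lam : ℝ) (hα1 : α ≤ 1) (hlam0 : 0 ≤ lam)
    (hDobr : ∀ μ ν : Measure E, IsProbabilityMeasure μ → IsProbabilityMeasure ν →
      ∀ x y : E, dTV ((P μ) x) ((P ν) y) ≤ 2 * (1 - α))
    (hLip : ∀ μ ν : Measure E, IsProbabilityMeasure μ → IsProbabilityMeasure ν →
      ∀ x : E, dTV ((P μ) x) ((P ν) x) ≤ lam * dTV μ ν)
    (μ ν : Measure E) (hμ : IsProbabilityMeasure μ) (hν : IsProbabilityMeasure ν)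
    {A : Set E} (hA : MeasurableSet A) :
    ((μ.bind ⇑(P μ)) A).toReal - ((ν.bind ⇑(P ν)) A).toReal
      ≤ (1 - α + lam) * (dTV μ ν / 2) - lam * (dTV μ ν / 2) ^ 2 := by
  haveI := hμ; haveI := hν; haveI := hMarkov μ; haveI := hMarkov ν
  obtain ⟨S, hS, hS1, hS2⟩ := hahn_decomposition (μ := μ) (ν := ν)
  have tR : ∀ (ρ : Measure E) [IsFiniteMeasure ρ] (C B : Set E), MeasurableSet B →
      (ρ (C ∩ B)).toReal + (ρ (C \ B)).toReal = (ρ C).toReal := by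
    intro ρ _ C B hB
    rw [← ENNReal.toReal_add (measure_ne_top _ _) (measure_ne_top _ _),
      measure_inter_add_diff C hB]
  have monoS : ∀ t : Set E, MeasurableSet t → t ⊆ S → (ν t).toReal ≤ (μ t).toReal :=
    fun t ht hts => ENNReal.toReal_mono (measure_ne_top _ _) (hS1 t ht hts)
  have monoSc : ∀ t : Set E, MeasurableSet t → t ⊆ Sᶜ → (μ t).toReal ≤ (ν t).toReal :=
    fun t ht hts => ENNReal.toReal_mono (measure_ne_top _ _) (hS2 t ht hts)
  set D : ℝ := (μ S).toReal - (ν S).toReal with hDdef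
  have hD0 : 0 ≤ D := by
    have := monoS S hS subset_rfl; simp only [hDdef]; linarith
  have hcompl : ∀ (ρ : Measure E) [IsProbabilityMeasure ρ],
      (ρ Sᶜ).toReal = 1 - (ρ S).toReal := by
    intro ρ _
    rw [prob_compl_eq_one_sub hS, ENNReal.toReal_sub_of_le prob_le_one ENNReal.one_ne_top,
      ENNReal.toReal_one]
  have hD1 : D ≤ 1 := by
    have h3 := measReal_le_one μ S
    have h4 : (0:ℝ) ≤ (ν S).toReal := ENNReal.toReal_nonneg
    simp only [hDdef]; linarith
  -- dTV μ ν = 2 * D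
  have hdtv : dTV μ ν = 2 * D := by
    apply le_antisymm
    · refine dTV_le_of_forall μ ν fun B hB => ?_
      have e1 : S ∩ B = B ∩ S := Set.inter_comm _ _
      have e2 : Sᶜ ∩ B = B \ S := by rw [Set.inter_comm, Set.diff_eq]
      have r1 := tR μ B S hS
      have r2 := tR ν B S hS
      have r3 := tR μ S B hB
      have r4 := tR ν S B hB
      have r5 := tR μ Sᶜ B hB
      have r6 := tR ν Sᶜ B hB
      rw [e1] at r3 r4
      rw [e2] at r5 r6
      have i1 := monoS (B ∩ S) (hB.inter hS) Set.inter_subset_right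
      have i2 := monoSc (B \ S) (hB.diff hS) (Set.diff_subset_compl _ _)
      have i3 := monoS (S \ B) (hS.diff hB) Set.diff_subset
      have i4 := monoSc (Sᶜ \ B) (hS.compl.diff hB) Set.diff_subset
      have c1 := hcompl μ
      have c2 := hcompl ν
      rw [abs_le]; constructor <;> [skip; skip] <;> simp only [hDdef] <;> linarith
    · have h := abs_sub_le_half_dTV μ ν hS
      rw [abs_of_nonneg (by simp only [hDdef] at hD0 ⊢; linarith)] at h
      linarith
  -- measure decomposition
  have hle1 : ν.restrict S ≤ μ.restrict S := by
    refine Measure.le_iff.mpr fun t ht => ?_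
    rw [Measure.restrict_apply ht, Measure.restrict_apply ht]
    exact hS1 _ (ht.inter hS) Set.inter_subset_right
  have hle2 : μ.restrict Sᶜ ≤ ν.restrict Sᶜ := by
    refine Measure.le_iff.mpr fun t ht => ?_
    rw [Measure.restrict_apply ht, Measure.restrict_apply ht]
    exact hS2 _ (ht.inter hS.compl) Set.inter_subset_right
  set γp : Measure E := μ.restrict S - ν.restrict S with hγp
  set γm : Measure E := ν.restrict Sᶜ - μ.restrict Sᶜ with hγm
  set η : Measure E := ν.restrict S + μ.restrict Sᶜ with hη
  haveI : IsFiniteMeasure γp := isFiniteMeasure_of_le (μ.restrict S) Measure.sub_le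
  haveI : IsFiniteMeasure γm := isFiniteMeasure_of_le (ν.restrict Sᶜ) Measure.sub_le
  haveI : IsFiniteMeasure η := by rw [hη]; infer_instance
  have hμd : μ = γp + η := by
    rw [hγp, hη, ← add_assoc, Measure.sub_add_cancel_of_le hle1,
      Measure.restrict_add_restrict_compl hS]
  have hνd : ν = γm + η := by
    have h2 : γm + μ.restrict Sᶜ = ν.restrict Sᶜ := Measure.sub_add_cancel_of_le hle2
    calc ν = ν.restrict S + ν.restrict Sᶜ := (Measure.restrict_add_restrict_compl hS).symm
    _ = ν.restrict S + (γm + μ.restrict Sᶜ) := by rw [h2]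
    _ = γm + η := by rw [hη]; abel
  -- masses
  have hγpu : (γp Set.univ).toReal = D := by
    rw [hγp, Measure.sub_apply MeasurableSet.univ hle1, Measure.restrict_apply_univ,
      Measure.restrict_apply_univ,
      ENNReal.toReal_sub_of_le (hS1 S hS subset_rfl) (measure_ne_top _ _)]
  have hγmu : (γm Set.univ).toReal = D := by
    rw [hγm, Measure.sub_apply MeasurableSet.univ hle2, Measure.restrict_apply_univ,
      Measure.restrict_apply_univ,
      ENNReal.toReal_sub_of_le (hS2 Sᶜ hS.compl subset_rfl) (measure_ne_top _ _)]
    have c1 := hcompl μ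
    have c2 := hcompl ν
    simp only [hDdef]; linarith
  have hηu : (η Set.univ).toReal = 1 - D := by
    rw [hη, Measure.add_apply, ENNReal.toReal_add (measure_ne_top _ _) (measure_ne_top _ _),
      Measure.restrict_apply_univ, Measure.restrict_apply_univ]
    have c1 := hcompl μ
    simp only [hDdef]; linarith
  -- functions
  set f : E → ℝ := fun x => (((P μ) x) A).toReal with hf
  set g : E → ℝ := fun x => (((P ν) x) A).toReal with hg
  have hfm : Measurable f := ((P μ).measurable_coe hA).ennreal_toReal
  have hgm : Measurable g := ((P ν).measurable_coe hA).ennreal_toReal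
  have hf0 : ∀ x, 0 ≤ f x := fun x => ENNReal.toReal_nonneg
  have hg0 : ∀ x, 0 ≤ g x := fun x => ENNReal.toReal_nonneg
  have hf1 : ∀ x, f x ≤ 1 := fun x => measReal_le_one ((P μ) x) A
  have hg1 : ∀ x, g x ≤ 1 := fun x => measReal_le_one ((P ν) x) A
  -- pointwise bounds from the hypotheses
  have hfg : ∀ x y : E, f x - g y ≤ 1 - α := by
    intro x y
    have h1 := abs_sub_le_half_dTV ((P μ) x) ((P ν) y) hA
    have h2 := hDobr μ ν hμ hν x y
    have := abs_le.mp h1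
    simp only [hf, hg]
    linarith [this.2]
  have hfgx : ∀ x : E, f x - g x ≤ lam * D := by
    intro x
    have h1 := abs_sub_le_half_dTV ((P μ) x) ((P ν) x) hA
    have h2 := hLip μ ν hμ hν x
    rw [hdtv] at h2
    have := abs_le.mp h1
    simp only [hf, hg]
    linarith [this.2]
  -- bind values as integrals
  have hbindμ : ((μ.bind ⇑(P μ)) A).toReal = ∫ x, f x ∂μ := by
    rw [Measure.bind_apply hA (Kernel.measurable (P μ)).aemeasurable]
    exact (integral_toReal ((P μ).measurable_coe hA).aemeasurable
      (ae_of_all _ fun x => measure_lt_top _ _)).symm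
  have hbindν : ((ν.bind ⇑(P ν)) A).toReal = ∫ x, g x ∂ν := by
    rw [Measure.bind_apply hA (Kernel.measurable (P ν)).aemeasurable]
    exact (integral_toReal ((P ν).measurable_coe hA).aemeasurable
      (ae_of_all _ fun x => measure_lt_top _ _)).symm
  -- split the integrals
  have hsplitμ : ∫ x, f x ∂μ = ∫ x, f x ∂γp + ∫ x, f x ∂η := by
    conv_lhs => rw [hμd]
    exact integral_add_measure (integrable_of_le_one hfm hf0 hf1 γp)
      (integrable_of_le_one hfm hf0 hf1 η)
  have hsplitν : ∫ x, g x ∂ν = ∫ x, g x ∂γm + ∫ x, g x ∂η := by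
    conv_lhs => rw [hνd]
    exact integral_add_measure (integrable_of_le_one hgm hg0 hg1 γm)
      (integrable_of_le_one hgm hg0 hg1 η)
  -- term 1: Lipschitz part
  have hterm1 : ∫ x, f x ∂η - ∫ x, g x ∂η ≤ lam * D * (1 - D) := by
    have h1 : ∫ x, f x ∂η - ∫ x, g x ∂η = ∫ x, (f x - g x) ∂η :=
      (integral_sub (integrable_of_le_one hfm hf0 hf1 η)
        (integrable_of_le_one hgm hg0 hg1 η)).symm
    rw [h1]
    have h2 : ∫ x, (f x - g x) ∂η ≤ ∫ _x, lam * D ∂η := by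
      refine integral_mono ((integrable_of_le_one hfm hf0 hf1 η).sub
        (integrable_of_le_one hgm hg0 hg1 η)) (integrable_const _) hfgx
    rw [integral_const, smul_eq_mul, measureReal_def, hηu] at h2
    nlinarith [h2]
  -- term 2: Dobrushin part
  have hterm2 : ∫ x, f x ∂γp - ∫ x, g x ∂γm ≤ (1 - α) * D := by
    rcases eq_or_lt_of_le hD0 with hDeq | hDpos
    · have h1 : ∫ x, f x ∂γp ≤ ∫ _x, (1:ℝ) ∂γp := by
        refine integral_mono (integrable_of_le_one hfm hf0 hf1 γp) (integrable_const _) hf1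
      rw [integral_const, smul_eq_mul, measureReal_def, hγpu] at h1
      have h2 : 0 ≤ ∫ x, g x ∂γm := integral_nonneg hg0
      rw [← hDeq] at h1 ⊢
      linarith
    · -- for every y, ∫ f dγp ≤ ((1-α) + g y) * D
      have key : ∀ y : E, ∫ x, f x ∂γp ≤ ((1 - α) + g y) * D := by
        intro y
        have h1 : ∫ x, f x ∂γp ≤ ∫ _x, ((1 - α) + g y) ∂γp := by
          refine integral_mono (integrable_of_le_one hfm hf0 hf1 γp) (integrable_const _)
            fun x => by linarith [hfg x y]
        rwa [integral_const, smul_eq_mul, measureReal_def, hγpu, mul_comm] at h1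
      have h2 : ∀ y : E, (∫ x, f x ∂γp) / D - (1 - α) ≤ g y := by
        intro y
        have := key y
        rw [div_sub' (ne_of_gt hDpos), div_le_iff₀ hDpos]
        nlinarith [key y]
      have h3 : ∫ _y, ((∫ x, f x ∂γp) / D - (1 - α)) ∂γm ≤ ∫ y, g y ∂γm := by
        refine integral_mono (integrable_const _) (integrable_of_le_one hgm hg0 hg1 γm) h2
      rw [integral_const, smul_eq_mul, measureReal_def, hγmu] at h3
      have hD' : D * ((∫ x, f x ∂γp) / D - (1 - α)) = (∫ x, f x ∂γp) - (1 - α) * D := by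
        field_simp
      rw [hD'] at h3
      linarith
  rw [hbindμ, hbindν, hsplitμ, hsplitν, hdtv]
  have heq : (1 - α + lam) * (2 * D / 2) - lam * (2 * D / 2) ^ 2
      = (1 - α) * D + lam * D * (1 - D) := by ring
  rw [heq]
  linarith

end aux

/-- The one-step contraction inequality: under the global nonlinear Dobrushin condition
with constant `α ∈ (0,1]` and the measure-Lipschitz condition with constant `lam ≥ 0`,
`d_TV(P_μ μ, P_ν ν) ≤ (1 − α + lam) d_TV(μ,ν) − (lam/2) d_TV(μ,ν)²`. -/
theorem stmt3 {E : Type*} [MeasurableSpace E]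
    (P : Measure E → Kernel E E) (hMarkov : ∀ μ, IsMarkovKernel (P μ))
    (α lam : ℝ) (hα0 : 0 < α) (hα1 : α ≤ 1) (hlam0 : 0 ≤ lam)
    (hDobr : ∀ μ ν : Measure E, IsProbabilityMeasure μ → IsProbabilityMeasure ν →
      ∀ x y : E, dTV ((P μ) x) ((P ν) y) ≤ 2 * (1 - α))
    (hLip : ∀ μ ν : Measure E, IsProbabilityMeasure μ → IsProbabilityMeasure ν →
      ∀ x : E, dTV ((P μ) x) ((P ν) x) ≤ lam * dTV μ ν)
    (μ ν : Measure E) (hμ : IsProbabilityMeasure μ) (hν : IsProbabilityMeasure ν) :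
    dTV (μ.bind ⇑(P μ)) (ν.bind ⇑(P ν))
      ≤ (1 - α + lam) * dTV μ ν - lam / 2 * (dTV μ ν) ^ 2 := by
  haveI := hμ; haveI := hν; haveI := hMarkov μ; haveI := hMarkov ν
  have hbound : dTV (μ.bind ⇑(P μ)) (ν.bind ⇑(P ν))
      ≤ 2 * ((1 - α + lam) * (dTV μ ν / 2) - lam * (dTV μ ν / 2) ^ 2) := by
    refine dTV_le_of_forall _ _ fun A hA => ?_
    rw [abs_le]
    constructor
    · have h := one_sided P hMarkov α lam hα1 hlam0
        (fun μ' ν' h1 h2 x y => hDobr μ' ν' h1 h2 x y)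
        (fun μ' ν' h1 h2 x => hLip μ' ν' h1 h2 x) ν μ hν hμ hA
      rw [dTV_comm ν μ] at h
      linarith
    · exact one_sided P hMarkov α lam hα1 hlam0 hDobr hLip μ ν hμ hν hA
  have h2 : 2 * ((1 - α + lam) * (dTV μ ν / 2) - lam * (dTV μ ν / 2) ^ 2)
      = (1 - α + lam) * dTV μ ν - lam / 2 * (dTV μ ν) ^ 2 := by ring
  rw [h2] at hbound
  exact hbound
end

section
/- Let (P_μ)_{μ∈𝒫(E)} be a nonlinear Markov transition kernel family on a measurable space (E,ℰ) satisfying the measure-Lipschitz condition with constant λ ≥ 0. For μ, ν ∈ 𝒫(E) let η(dx) = (dμ/dν ∧ 1) ν(dx), where dμ/dν is the Radon–Nikodym derivative of the absolutely continuous part of μ with respect to ν. Then d_TV(P_μ η, P_ν η) ≤ λ d_TV(μ,ν)(1 − d_TV(μ,ν)/2). -/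
open MeasureTheory ProbabilityTheory
open scoped ENNReal

lemma dTV_bdd {E : Type*} [MeasurableSpace E] (μ ν : Measure E)
    [IsFiniteMeasure μ] [IsFiniteMeasure ν] :
    BddAbove (Set.range fun A : {A : Set E // MeasurableSet A} =>
      |(μ A.1).toReal - (ν A.1).toReal|) := by
  refine ⟨(μ Set.univ).toReal + (ν Set.univ).toReal, ?_⟩
  rintro _ ⟨A, rfl⟩
  have h1 : (μ A.1).toReal ≤ (μ Set.univ).toReal :=
    ENNReal.toReal_mono (measure_ne_top _ _) (measure_mono (Set.subset_univ _))
  have h2 : (ν A.1).toReal ≤ (ν Set.univ).toReal :=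
    ENNReal.toReal_mono (measure_ne_top _ _) (measure_mono (Set.subset_univ _))
  have h3 : (0:ℝ) ≤ (μ A.1).toReal := ENNReal.toReal_nonneg
  have h4 : (0:ℝ) ≤ (ν A.1).toReal := ENNReal.toReal_nonneg
  rw [abs_sub_le_iff]; constructor <;> linarith

lemma dTV_nonneg {E : Type*} [MeasurableSpace E] (μ ν : Measure E) : 0 ≤ dTV μ ν := by
  have : (0:ℝ) ≤ ⨆ A : {A : Set E // MeasurableSet A}, |(μ A.1).toReal - (ν A.1).toReal| :=
    Real.iSup_nonneg fun A => abs_nonneg _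
  unfold dTV; linarith

lemma abs_le_half_dTV {E : Type*} [MeasurableSpace E] (μ ν : Measure E)
    [IsFiniteMeasure μ] [IsFiniteMeasure ν] {A : Set E} (hA : MeasurableSet A) :
    |(μ A).toReal - (ν A).toReal| ≤ dTV μ ν / 2 := by
  have := le_ciSup (dTV_bdd μ ν) ⟨A, hA⟩
  unfold dTV; simp only at this ⊢; linarith

/-- With `η(dx) = (dμ/dν ∧ 1) ν(dx)`, under the measure-Lipschitz condition with constant
`lam ≥ 0` one has `d_TV(P_μ η, P_ν η) ≤ lam d_TV(μ,ν) (1 − d_TV(μ,ν)/2)`. -/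
theorem stmt4 {E : Type*} [MeasurableSpace E]
    (P : Measure E → Kernel E E) (hMarkov : ∀ μ, IsMarkovKernel (P μ))
    (lam : ℝ) (hlam0 : 0 ≤ lam)
    (hLip : ∀ μ ν : Measure E, IsProbabilityMeasure μ → IsProbabilityMeasure ν →
      ∀ x : E, dTV ((P μ) x) ((P ν) x) ≤ lam * dTV μ ν)
    (μ ν : Measure E) (hμ : IsProbabilityMeasure μ) (hν : IsProbabilityMeasure ν)
    (η : Measure E) (hη : η = ν.withDensity (fun x => min (μ.rnDeriv ν x) 1)) :
    dTV (η.bind ⇑(P μ)) (η.bind ⇑(P ν)) ≤ lam * dTV μ ν * (1 - dTV μ ν / 2) := by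
  haveI := hMarkov μ; haveI := hMarkov ν
  set f := μ.rnDeriv ν with hf
  set g : E → ℝ≥0∞ := fun x => min (f x) 1 with hg
  have hgmeas : Measurable g := (μ.measurable_rnDeriv ν).min measurable_const
  have hg1 : ∀ x, g x ≤ 1 := fun x => min_le_right _ _
  have hgf : ∀ x, g x ≤ f x := fun x => min_le_left _ _
  -- η is a finite measure with η(univ) ≤ 1
  have hηuniv : η Set.univ = ∫⁻ x, g x ∂ν := by
    rw [hη, withDensity_apply _ MeasurableSet.univ, Measure.restrict_univ]
  have hηle : η Set.univ ≤ 1 := by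
    rw [hηuniv]
    calc ∫⁻ x, g x ∂ν ≤ ∫⁻ _, 1 ∂ν := lintegral_mono hg1
    _ = ν Set.univ := lintegral_one
    _ = 1 := measure_univ
  haveI hηfin : IsFiniteMeasure η :=
    ⟨lt_of_le_of_lt hηle ENNReal.one_lt_top⟩
  have hηne : η Set.univ ≠ ⊤ := measure_ne_top _ _
  set e : ℝ := (η Set.univ).toReal with he
  have he1 : e ≤ 1 := by
    rw [he]
    calc (η Set.univ).toReal ≤ (1:ℝ≥0∞).toReal := ENNReal.toReal_mono (by simp) hηle
    _ = 1 := by simp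
  have he0 : 0 ≤ e := ENNReal.toReal_nonneg
  -- Step A : dTV μ ν ≤ 2 * (1 - e)
  have hdecomp : μ.singularPart ν + ν.withDensity f = μ := μ.singularPart_add_rnDeriv ν
  have hStepA : ∀ A : Set E, MeasurableSet A → |(μ A).toReal - (ν A).toReal| ≤ 1 - e := by
    intro A hA
    have hsplit : η Set.univ = ∫⁻ x in A, g x ∂ν + ∫⁻ x in Aᶜ, g x ∂ν := by
      rw [hηuniv, lintegral_add_compl _ hA]
    have hμA : μ A = μ.singularPart ν A + ∫⁻ x in A, f x ∂ν := by
      conv_lhs => rw [← hdecomp]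
      rw [Measure.add_apply, withDensity_apply _ hA]
    have hgA : ∫⁻ x in A, g x ∂ν ≤ ν A := by
      calc ∫⁻ x in A, g x ∂ν ≤ ∫⁻ _ in A, 1 ∂ν := setLIntegral_mono measurable_const fun x _ => hg1 x
      _ = ν A := by rw [setLIntegral_one]
    have hgAc : ∫⁻ x in Aᶜ, g x ∂ν ≤ ∫⁻ x in Aᶜ, f x ∂ν :=
      lintegral_mono fun x => hgf x
    -- claim 1 : μ A + η univ ≤ 1 + ν A
    have hc1 : μ A + η Set.univ ≤ 1 + ν A := by
      have hsA : μ.singularPart ν A ≤ μ.singularPart ν Set.univ :=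
        measure_mono (Set.subset_univ _)
      have htot : ∫⁻ x in A, f x ∂ν + ∫⁻ x in Aᶜ, f x ∂ν = ∫⁻ x, f x ∂ν :=
        lintegral_add_compl _ hA
      have hμuniv : μ.singularPart ν Set.univ + ∫⁻ x, f x ∂ν = 1 := by
        have := hμA
        have h2 : μ Set.univ = μ.singularPart ν Set.univ + ∫⁻ x in Set.univ, f x ∂ν := by
          conv_lhs => rw [← hdecomp]
          rw [Measure.add_apply, withDensity_apply _ MeasurableSet.univ]
        rw [Measure.restrict_univ] at h2
        rw [← h2, measure_univ]
      calc μ A + η Set.univ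
          = μ.singularPart ν A + ∫⁻ x in A, f x ∂ν + (∫⁻ x in A, g x ∂ν + ∫⁻ x in Aᶜ, g x ∂ν) := by
            rw [hμA, hsplit]
        _ ≤ μ.singularPart ν Set.univ + ∫⁻ x in A, f x ∂ν + (ν A + ∫⁻ x in Aᶜ, f x ∂ν) := by
            gcongr
        _ = (μ.singularPart ν Set.univ + (∫⁻ x in A, f x ∂ν + ∫⁻ x in Aᶜ, f x ∂ν)) + ν A := by
            ring
        _ = 1 + ν A := by rw [htot, hμuniv]
    -- claim 2 : ν A + η univ ≤ 1 + μ A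
    have hc2 : ν A + η Set.univ ≤ 1 + μ A := by
      have hfA : ∫⁻ x in A, f x ∂ν ≤ μ A := by
        have hle : ν.withDensity f ≤ μ := μ.withDensity_rnDeriv_le ν
        calc ∫⁻ x in A, f x ∂ν = ν.withDensity f A := (withDensity_apply _ hA).symm
        _ ≤ μ A := hle A
      have hgA' : ∫⁻ x in A, g x ∂ν ≤ μ A :=
        le_trans (lintegral_mono fun x => hgf x) hfA
      have hgAc' : ∫⁻ x in Aᶜ, g x ∂ν ≤ ν Aᶜ := by
        calc ∫⁻ x in Aᶜ, g x ∂ν ≤ ∫⁻ _ in Aᶜ, 1 ∂ν :=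
              setLIntegral_mono measurable_const fun x _ => hg1 x
        _ = ν Aᶜ := by rw [setLIntegral_one]
      have hνsum : ν A + ν Aᶜ = 1 := by
        rw [measure_add_measure_compl hA, measure_univ]
      calc ν A + η Set.univ = ν A + (∫⁻ x in A, g x ∂ν + ∫⁻ x in Aᶜ, g x ∂ν) := by rw [hsplit]
        _ ≤ ν A + (μ A + ν Aᶜ) := by gcongr
        _ = (ν A + ν Aᶜ) + μ A := by ring
        _ = 1 + μ A := by rw [hνsum]
    -- pass to reals
    have hμAne : μ A ≠ ⊤ := measure_ne_top _ _
    have hνAne : ν A ≠ ⊤ := measure_ne_top _ _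
    have hr1 : (μ A).toReal + e ≤ 1 + (ν A).toReal := by
      have := ENNReal.toReal_mono (by finiteness) hc1
      rwa [ENNReal.toReal_add hμAne hηne, ENNReal.toReal_add (by simp) hνAne,
        ENNReal.toReal_one] at this
    have hr2 : (ν A).toReal + e ≤ 1 + (μ A).toReal := by
      have := ENNReal.toReal_mono (by finiteness) hc2
      rwa [ENNReal.toReal_add hνAne hηne, ENNReal.toReal_add (by simp) hμAne,
        ENNReal.toReal_one] at this
    rw [abs_sub_le_iff]; constructor <;> linarith
  have hStepA' : dTV μ ν ≤ 2 * (1 - e) := by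
    unfold dTV
    have : (⨆ A : {A : Set E // MeasurableSet A}, |(μ A.1).toReal - (ν A.1).toReal|) ≤ 1 - e :=
      Real.iSup_le (fun A => hStepA A.1 A.2) (by linarith)
    linarith
  have heA : e ≤ 1 - dTV μ ν / 2 := by linarith
  -- Step B : pointwise bound on the bind measures
  set c : ℝ := lam * dTV μ ν / 2 with hc
  have hc0 : 0 ≤ c := by
    have := dTV_nonneg μ ν
    positivity
  have hStepB : ∀ A : Set E, MeasurableSet A →
      |((η.bind ⇑(P μ)) A).toReal - ((η.bind ⇑(P ν)) A).toReal| ≤ c * e := by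
    intro A hA
    have hbind : ∀ κ : Kernel E E, (η.bind ⇑κ) A = ∫⁻ x, κ x A ∂η := fun κ =>
      Measure.bind_apply hA κ.measurable.aemeasurable
    have hkey : ∀ κ : Kernel E E, IsMarkovKernel κ →
        ((η.bind ⇑κ) A).toReal = ∫ x, (κ x A).toReal ∂η ∧
        Integrable (fun x => (κ x A).toReal) η := by
      intro κ hκ
      have hmeas : Measurable fun x => κ x A := κ.measurable_coe hA
      have hne : ∫⁻ x, κ x A ∂η ≠ ⊤ := by
        refine ne_top_of_le_ne_top ?_ (lintegral_mono fun x => prob_le_one)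
        rw [lintegral_one]; exact hηne
      constructor
      · rw [hbind κ, ← integral_toReal hmeas.aemeasurable
          (Filter.Eventually.of_forall fun x => measure_lt_top _ _)]
      · exact integrable_toReal_of_lintegral_ne_top hmeas.aemeasurable hne
    obtain ⟨hμeq, hμint⟩ := hkey (P μ) (hMarkov μ)
    obtain ⟨hνeq, hνint⟩ := hkey (P ν) (hMarkov ν)
    rw [hμeq, hνeq, ← integral_sub hμint hνint]
    calc |∫ x, ((P μ x A).toReal - (P ν x A).toReal) ∂η|
        ≤ ∫ x, |(P μ x A).toReal - (P ν x A).toReal| ∂η := by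
          simpa only [Real.norm_eq_abs] using
            norm_integral_le_integral_norm (μ := η)
              (fun x => (P μ x A).toReal - (P ν x A).toReal)
      _ ≤ ∫ _, c ∂η := by
          refine integral_mono_of_nonneg (Filter.Eventually.of_forall fun x => abs_nonneg _)
            (integrable_const c) (Filter.Eventually.of_forall fun x => ?_)
          have h1 : |(P μ x A).toReal - (P ν x A).toReal| ≤ dTV (P μ x) (P ν x) / 2 :=
            abs_le_half_dTV _ _ hA
          have h2 : dTV (P μ x) (P ν x) ≤ lam * dTV μ ν := hLip μ ν hμ hν x
          rw [hc]; linarith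
      _ = c * e := by rw [integral_const, smul_eq_mul, he, measureReal_def]; ring
  -- conclude
  have hsup : dTV (η.bind ⇑(P μ)) (η.bind ⇑(P ν)) ≤ 2 * (c * e) := by
    unfold dTV
    have : (⨆ A : {A : Set E // MeasurableSet A},
        |((η.bind ⇑(P μ)) A.1).toReal - ((η.bind ⇑(P ν)) A.1).toReal|) ≤ c * e :=
      Real.iSup_le (fun A => hStepB A.1 A.2) (mul_nonneg hc0 he0)
    linarith
  calc dTV (η.bind ⇑(P μ)) (η.bind ⇑(P ν)) ≤ 2 * (c * e) := hsup
    _ = lam * dTV μ ν * e := by rw [hc]; ring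
    _ ≤ lam * dTV μ ν * (1 - dTV μ ν / 2) := by
        have h0 : 0 ≤ lam * dTV μ ν := mul_nonneg hlam0 (dTV_nonneg μ ν)
        exact mul_le_mul_of_nonneg_left heA h0
end
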